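/- arXiv:1007.3949 — 4 statements merged into one kernel-verified Lean document; each statement's English description precedes it below -/
import Mathlib

section
/- If G is a simple graph on n vertices and 1 ≤ k ≤ n, then the sum of the k largest singular values of the adjacency matrix of G is at most (1/2)(1 + √k)·n. -/
open Matrix BigOperators


lemma my_trace_eq_sum_eigenvalues {m : Type*} [Fintype m] [DecidableEq m]
    {B : Matrix m m ℝ} (hB : B.IsHermitian) : B.trace = ∑ i, hB.eigenvalues i := by
  exact hB.trace_eq_sum_eigenvalues

lemma my_quadform_le {m : Type*} [Fintype m] [DecidableEq m]
    {B : Matrix m m ℝ} (hB : B.IsHermitian) (c : ℝ) (hc : ∀ i, hB.eigenvalues i ≤ c)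
    (x : m → ℝ) : x ⬝ᵥ B.mulVec x ≤ c * (x ⬝ᵥ x) := by
  set U : Matrix m m ℝ := (hB.eigenvectorUnitary : Matrix m m ℝ) with hU
  have hUU : U * Uᴴ = 1 := by
    rw [show Uᴴ = star U from rfl]
    exact (Matrix.mem_unitaryGroup_iff).mp hB.eigenvectorUnitary.2
  have hCeq : c • (1 : Matrix m m ℝ) - B
      = U * Matrix.diagonal (fun i => c - hB.eigenvalues i) * Uᴴ := by
    have h1 : Matrix.diagonal (fun i => c - hB.eigenvalues i)
        = c • (1 : Matrix m m ℝ) - Matrix.diagonal hB.eigenvalues := by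
      rw [Matrix.smul_one_eq_diagonal, ← Matrix.diagonal_sub]
    rw [h1, Matrix.mul_sub, Matrix.sub_mul]
    have h2 : U * (c • (1 : Matrix m m ℝ)) * Uᴴ = c • (1 : Matrix m m ℝ) := by
      rw [Matrix.mul_smul, Matrix.smul_mul, Matrix.mul_one, hUU]
    rw [h2]
    congr 1
    conv_lhs => rw [hB.spectral_theorem]
    simp [RCLike.ofReal_real_eq_id, hU, Matrix.star_eq_conjTranspose]
  have hPSD : (c • (1 : Matrix m m ℝ) - B).PosSemidef := by
    rw [hCeq]
    exact (Matrix.posSemidef_diagonal_iff.mpr fun i => sub_nonneg.mpr (hc i)).mul_mul_conjTranspose_same U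
  have := hPSD.dotProduct_mulVec_nonneg x
  simp only [star_trivial, Matrix.sub_mulVec, Matrix.smul_mulVec, Matrix.one_mulVec,
    dotProduct_sub, dotProduct_smul, smul_eq_mul] at this
  linarith



set_option maxHeartbeats 800000 in
lemma key_ineq (k : ℕ) (hk : 1 ≤ k) (n μ T : ℝ) (hn : 0 ≤ n) (hμ : 0 ≤ μ)
    (h1 : μ^2 ≤ T) (h2 : T ≤ n^2) (h3 : T ≤ μ * n) :
    μ + Real.sqrt (((k : ℝ) - 1) * (T - μ^2)) ≤ (1/2) * (1 + Real.sqrt k) * n := by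
  set r := Real.sqrt k with hrdef
  have hr2 : r^2 = (k : ℝ) := Real.sq_sqrt (by positivity)
  have hr1 : 1 ≤ r := by
    rw [hrdef, show (1:ℝ) = Real.sqrt 1 by simp]
    exact Real.sqrt_le_sqrt (by exact_mod_cast hk)
  set C := (1/2) * (1 + r) * n with hCdef
  have hCn : n ≤ C := by nlinarith
  have hμn : μ ≤ n := by nlinarith [sq_nonneg (μ - n), sq_nonneg (μ + n)]
  have harg : 0 ≤ ((k : ℝ) - 1) * (T - μ^2) := by
    have : (1:ℝ) ≤ (k:ℝ) := by exact_mod_cast hk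
    nlinarith
  have hgoal : ((k : ℝ) - 1) * (T - μ^2) ≤ (C - μ)^2 := by
    have hk1 : (1:ℝ) ≤ (k:ℝ) := by exact_mod_cast hk
    by_cases hcase : (k:ℝ) * T ≤ C^2
    · nlinarith [sq_nonneg ((k:ℝ)*μ - C), hcase]
    · push_neg at hcase
      have hnpos : 0 < n := by
        rcases hn.lt_or_eq with h|h
        · exact h
        · exfalso
          have hT0 : T ≤ 0 := by nlinarith
          have hkT : (k:ℝ) * T ≤ 0 :=
            mul_nonpos_of_nonneg_of_nonpos (by positivity) hT0
          nlinarith [sq_nonneg C]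
      have hC0 : 0 ≤ C := by nlinarith
      have hkTCn : C * n ≤ (k:ℝ) * T := by nlinarith
      have hstep : (k:ℝ) * T - C * n ≤ n * ((k:ℝ) * μ - C) := by nlinarith
      have hsq : ((k:ℝ) * T - C * n)^2 ≤ (n * ((k:ℝ) * μ - C))^2 := by
        have h0 : 0 ≤ (k:ℝ) * T - C * n := by linarith
        nlinarith
      have hid : 4*(((k:ℝ)*T - C*n)^2 - ((k:ℝ)-1)*n^2*((k:ℝ)*T - C^2))
          = (2*(k:ℝ)*T - 2*C*n - ((k:ℝ)-1)*n^2)^2 := by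
        have hk' : (k:ℝ) = r^2 := hr2.symm
        rw [hk', hCdef]; ring
      have hident : (k:ℝ) * n^2 * ((C-μ)^2 - ((k:ℝ)-1)*(T-μ^2))
          = (n*((k:ℝ)*μ - C))^2 - ((k:ℝ)-1)*n^2*((k:ℝ)*T - C^2) := by ring
      have hfinal : 0 ≤ (k:ℝ) * n^2 * ((C-μ)^2 - ((k:ℝ)-1)*(T-μ^2)) := by
        rw [hident]
        linarith [hsq, hid, sq_nonneg (2*(k:ℝ)*T - 2*C*n - ((k:ℝ)-1)*n^2)]
      have hkn2 : 0 < (k:ℝ) * n^2 := by positivity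
      by_contra hcon
      push_neg at hcon
      nlinarith [mul_pos hkn2 (by linarith : (0:ℝ) < ((k:ℝ)-1)*(T-μ^2) - (C-μ)^2)]
  calc μ + Real.sqrt (((k : ℝ) - 1) * (T - μ^2))
      ≤ μ + (C - μ) := by
        have h := Real.sqrt_le_sqrt hgoal
        rw [Real.sqrt_sq (by linarith : (0:ℝ) ≤ C - μ)] at h
        linarith
    _ = C := by ring


noncomputable def singularValues {α β : Type*} [Fintype α] [Fintype β] [DecidableEq α]
    (A : Matrix α β ℝ) : α → ℝ :=
  fun i => Real.sqrt ((Matrix.isHermitian_mul_conjTranspose_self A).eigenvalues i)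

/-- The Ky Fan `k`-norm: the sum of the `k` largest singular values, expressed as the
largest sum of singular values over index sets of size `k`. -/
noncomputable def kyFan {α β : Type*} [Fintype α] [Fintype β] [DecidableEq α]
    (k : ℕ) (A : Matrix α β ℝ) : ℝ :=
  sSup ((fun s : Finset α => ∑ i ∈ s, singularValues A i) '' {s | s.card = k})

lemma adj_isHermitian {n : ℕ} (G : SimpleGraph (Fin n)) [DecidableRel G.Adj] :
    (G.adjMatrix ℝ).IsHermitian := by
  unfold Matrix.IsHermitian
  rw [Matrix.conjTranspose_eq_transpose_of_trivial]
  exact G.isSymm_adjMatrix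

theorem kyFan_graph_le (n k : ℕ) (hk1 : 1 ≤ k) (hkn : k ≤ n)
    (G : SimpleGraph (Fin n)) [DecidableRel G.Adj] :
    kyFan k (G.adjMatrix ℝ) ≤ (1 / 2) * (1 + Real.sqrt k) * n := by
  classical
  set A : Matrix (Fin n) (Fin n) ℝ := G.adjMatrix ℝ with hA
  have hB := Matrix.isHermitian_mul_conjTranspose_self A
  set lam : Fin n → ℝ := hB.eigenvalues with hlam
  have hnn : ∀ i, 0 ≤ lam i := fun i =>
    Matrix.eigenvalues_self_mul_conjTranspose_nonneg A i
  set T : ℝ := ∑ i, lam i with hT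
  have hent : ∀ i j, A i j * A i j = A i j := by
    intro i j
    by_cases h : G.Adj i j <;> simp [hA, h]
  have hent01 : ∀ i j, 0 ≤ A i j ∧ A i j ≤ 1 := by
    intro i j
    by_cases h : G.Adj i j <;> simp [hA, h]
  have hTr : T = ∑ i, ∑ j, A i j := by
    rw [hT, ← my_trace_eq_sum_eigenvalues hB]
    simp only [Matrix.trace, Matrix.diag, Matrix.mul_apply, Matrix.conjTranspose_apply,
      star_trivial]
    exact Finset.sum_congr rfl fun i _ => Finset.sum_congr rfl fun j _ => hent i j
  have hT0 : 0 ≤ T := Finset.sum_nonneg fun i _ => hnn i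
  have hTn2 : T ≤ (n:ℝ)^2 := by
    rw [hTr]
    calc ∑ i, ∑ j, A i j ≤ ∑ _i : Fin n, ∑ _j : Fin n, (1:ℝ) := by
          refine Finset.sum_le_sum fun i _ => Finset.sum_le_sum fun j _ => (hent01 i j).2
      _ = (n:ℝ)^2 := by simp [sq]
  -- maximal eigenvalue
  haveI : Nonempty (Fin n) := ⟨⟨0, by omega⟩⟩
  obtain ⟨i0, -, hmax⟩ := Finset.exists_max_image Finset.univ lam Finset.univ_nonempty
  have hmax' : ∀ i, lam i ≤ lam i0 := fun i => hmax i (Finset.mem_univ i)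
  set c : ℝ := lam i0 with hc
  set μ : ℝ := Real.sqrt c with hμdef
  have hμ2 : μ^2 = c := Real.sq_sqrt (hnn i0)
  -- Rayleigh with all-ones vector
  have hray : T ≤ μ * n := by
    set x : Fin n → ℝ := fun _ => 1 with hx
    have hq := my_quadform_le hB c hmax' x
    have hxx : x ⬝ᵥ x = (n:ℝ) := by simp [hx, dotProduct]
    have hqv : x ⬝ᵥ (A * Aᴴ).mulVec x = ∑ l, (∑ i, A i l)^2 := by
      have h1 : x ⬝ᵥ (A * Aᴴ).mulVec x = ∑ i, ∑ j, ∑ l, A i l * A j l := by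
        simp [hx, dotProduct, Matrix.mulVec, Matrix.mul_apply, Matrix.conjTranspose_apply]
      rw [h1]
      calc ∑ i, ∑ j, ∑ l, A i l * A j l
          = ∑ i, ∑ l, ∑ j, A i l * A j l :=
            Finset.sum_congr rfl fun i _ => Finset.sum_comm
        _ = ∑ l, ∑ i, ∑ j, A i l * A j l := Finset.sum_comm
        _ = ∑ l, (∑ i, A i l) * (∑ j, A j l) := by
            refine Finset.sum_congr rfl fun l _ => ?_
            rw [Finset.sum_mul]
            exact Finset.sum_congr rfl fun i _ => (Finset.mul_sum _ _ _).symm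
        _ = ∑ l, (∑ i, A i l)^2 := by
            exact Finset.sum_congr rfl fun l _ => (sq _).symm
    have hCS : T^2 ≤ (n:ℝ) * ∑ l, (∑ i, A i l)^2 := by
      have : T = ∑ l, ∑ i, A i l := by rw [hTr]; exact Finset.sum_comm
      rw [this]
      have := sq_sum_le_card_mul_sum_sq (s := (Finset.univ : Finset (Fin n)))
        (f := fun l => ∑ i, A i l)
      simpa using this
    have hc2 : T^2 ≤ c * (n:ℝ)^2 := by
      rw [hxx] at hq
      rw [hqv] at hq
      nlinarith [hq, hCS, Nat.cast_nonneg (α := ℝ) n]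
    have hμn0 : 0 ≤ μ * n := mul_nonneg (Real.sqrt_nonneg _) (Nat.cast_nonneg n)
    nlinarith [sq_nonneg (μ * n - T), sq_nonneg (μ * n + T), hμ2]
  have hcT : c ≤ T := by
    rw [hT]
    exact Finset.single_le_sum (fun i _ => hnn i) (Finset.mem_univ i0)
  -- per-set bound
  apply Real.sSup_le
  · rintro x ⟨s, hs, rfl⟩
    simp only [Set.mem_setOf_eq] at hs
    have hsne : s.Nonempty := Finset.card_pos.mp (by omega)
    obtain ⟨j, hjs, hji0⟩ : ∃ j ∈ s, (i0 ∈ s → j = i0) := by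
      by_cases h : i0 ∈ s
      · exact ⟨i0, h, fun _ => rfl⟩
      · obtain ⟨j, hj⟩ := hsne
        exact ⟨j, hj, fun h' => absurd h' h⟩
    have hsub : s.erase j ⊆ Finset.univ.erase i0 := by
      intro a ha
      rw [Finset.mem_erase] at ha ⊢
      refine ⟨fun heq => ha.1 ?_, Finset.mem_univ a⟩
      rw [heq, hji0 (heq ▸ ha.2)]
    have hsplit : ∑ i ∈ s, singularValues A i
        = singularValues A j + ∑ i ∈ s.erase j, singularValues A i :=
      (Finset.add_sum_erase s _ hjs).symm
    have hb1 : singularValues A j ≤ μ := Real.sqrt_le_sqrt (hmax' j)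
    have hb2 : ∑ i ∈ s.erase j, singularValues A i
        ≤ Real.sqrt (((k:ℝ) - 1) * (T - μ^2)) := by
      have hcard : (s.erase j).card = k - 1 := by
        rw [Finset.card_erase_of_mem hjs, hs]
      have hsq : (∑ i ∈ s.erase j, singularValues A i)^2
          ≤ ((k:ℝ) - 1) * ∑ i ∈ s.erase j, lam i := by
        have h := sq_sum_le_card_mul_sum_sq (s := s.erase j)
          (f := fun i => singularValues A i)
        rw [hcard] at h
        have hcast : ((k - 1 : ℕ) : ℝ) = (k:ℝ) - 1 := by
          rw [Nat.cast_sub hk1]; simp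
        have hsv : ∑ i ∈ s.erase j, (singularValues A i)^2 = ∑ i ∈ s.erase j, lam i :=
          Finset.sum_congr rfl fun i _ => Real.sq_sqrt (hnn i)
        rw [hsv, hcast] at h
        exact h
      have hsum2 : ∑ i ∈ s.erase j, lam i ≤ T - μ^2 := by
        have h := Finset.sum_le_sum_of_subset_of_nonneg hsub
          (fun i _ _ => hnn i)
        have herase : ∑ i ∈ Finset.univ.erase i0, lam i = T - c := by
          have := Finset.add_sum_erase Finset.univ lam (Finset.mem_univ i0)
          rw [← hT] at this
          linarith
        rw [herase] at h
        rw [hμ2]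
        exact h
      have hnneg : 0 ≤ ∑ i ∈ s.erase j, singularValues A i :=
        Finset.sum_nonneg fun i _ => Real.sqrt_nonneg _
      have hk1' : (1:ℝ) ≤ (k:ℝ) := by exact_mod_cast hk1
      have harg : (∑ i ∈ s.erase j, singularValues A i)^2 ≤ ((k:ℝ) - 1) * (T - μ^2) := by
        refine hsq.trans ?_
        exact mul_le_mul_of_nonneg_left hsum2 (by linarith)
      calc ∑ i ∈ s.erase j, singularValues A i
          = Real.sqrt ((∑ i ∈ s.erase j, singularValues A i)^2) :=
            (Real.sqrt_sq hnneg).symm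
        _ ≤ Real.sqrt (((k:ℝ) - 1) * (T - μ^2)) := Real.sqrt_le_sqrt harg
    have hkey := key_ineq k hk1 (n:ℝ) μ T (Nat.cast_nonneg n) (Real.sqrt_nonneg _)
      (by rw [hμ2]; exact hcT) hTn2 hray
    show ∑ i ∈ s, singularValues A i ≤ 1 / 2 * (1 + Real.sqrt k) * n
    rw [hsplit]
    linarith
  · positivity
end

section
/- If G is a simple graph on k vertices, then the energy of G (the sum of the absolute values of all eigenvalues of its adjacency matrix) is at most (1/2)(1 + √k)·k. -/
open Matrix BigOperators

section aux
variable {n : Type*} [Fintype n] [DecidableEq n] {A : Matrix n n ℝ} (hA : A.IsHermitian)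

lemma KM.sum_eig : ∑ i, hA.eigenvalues i = A.trace := by
  nth_rewrite 2 [hA.spectral_theorem]; rw [Unitary.conjStarAlgAut_apply]
  rw [Matrix.trace_mul_cycle, Unitary.star_mul_self_of_mem
    hA.eigenvectorUnitary.2, Matrix.one_mul]
  simp [Matrix.trace, Matrix.diag]

lemma KM.sq_decomp : A * A = (hA.eigenvectorUnitary : Matrix n n ℝ) *
    (diagonal (RCLike.ofReal ∘ hA.eigenvalues) * diagonal (RCLike.ofReal ∘ hA.eigenvalues)) *
    (star (hA.eigenvectorUnitary : Matrix n n ℝ)) := by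
  set U := (hA.eigenvectorUnitary : Matrix n n ℝ)
  set D := diagonal (RCLike.ofReal ∘ hA.eigenvalues : n → ℝ)
  have h1 : star U * U = 1 := Unitary.star_mul_self_of_mem hA.eigenvectorUnitary.2
  calc A * A = U * (D * ((star U * U) * (D * star U))) := by
        conv_lhs => rw [hA.spectral_theorem, Unitary.conjStarAlgAut_apply]
        simp only [Matrix.mul_assoc]
        rfl
    _ = U * (D * D) * star U := by rw [h1, Matrix.one_mul]; simp only [Matrix.mul_assoc]

lemma KM.sum_eig_sq : ∑ i, (hA.eigenvalues i)^2 = (A * A).trace := by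
  rw [KM.sq_decomp hA, Matrix.trace_mul_cycle, Unitary.star_mul_self_of_mem
    hA.eigenvectorUnitary.2, Matrix.one_mul, Matrix.diagonal_mul_diagonal]
  simp [Matrix.trace, Matrix.diag, sq]

lemma KM.rayleigh (x : n → ℝ) :
    x ⬝ᵥ (A *ᵥ x) = ∑ i, hA.eigenvalues i *
      ((star (hA.eigenvectorUnitary : Matrix n n ℝ) *ᵥ x) i)^2 ∧
    x ⬝ᵥ x = ∑ i, ((star (hA.eigenvectorUnitary : Matrix n n ℝ) *ᵥ x) i)^2 := by
  set U := (hA.eigenvectorUnitary : Matrix n n ℝ)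
  set D := diagonal (RCLike.ofReal ∘ hA.eigenvalues : n → ℝ)
  set y := star U *ᵥ x with hy
  have hstar : star U = Uᵀ := by
    rw [Matrix.star_eq_conjTranspose, Matrix.conjTranspose_eq_transpose_of_trivial]
  have h2 : ∀ w : n → ℝ, x ⬝ᵥ (U *ᵥ w) = y ⬝ᵥ w := by
    intro w
    rw [Matrix.dotProduct_mulVec, hy, hstar, Matrix.mulVec_transpose]
  constructor
  · conv_lhs => rw [hA.spectral_theorem, Unitary.conjStarAlgAut_apply]
    rw [← Matrix.mulVec_mulVec, ← Matrix.mulVec_mulVec, h2]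
    simp [Matrix.mulVec_diagonal, dotProduct, sq]
    exact Finset.sum_congr rfl fun i _ => by ring
  · have h3 : y ⬝ᵥ y = x ⬝ᵥ x := by
      rw [hy, Matrix.dotProduct_mulVec, ← Matrix.mulVec_transpose, hstar,
        Matrix.transpose_transpose, Matrix.mulVec_mulVec,
        ← hstar, Unitary.mul_star_self_of_mem hA.eigenvectorUnitary.2, Matrix.one_mulVec]
    rw [← h3]; simp [dotProduct, sq]

end aux

theorem energy_le_koolen_moulton (k : ℕ) (G : SimpleGraph (Fin k)) [DecidableRel G.Adj] :
    ∑ i, |(adj_isHermitian G).eigenvalues i| ≤ (1 / 2) * (1 + Real.sqrt k) * k := by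
  rcases Nat.eq_zero_or_pos k with hk0 | hkpos
  · subst hk0; simp
  set A := G.adjMatrix ℝ with hAdef
  set hA := adj_isHermitian G
  set μ := hA.eigenvalues with hμ
  -- the all-ones vector
  set x : Fin k → ℝ := fun _ => 1 with hx
  obtain ⟨r1, r2⟩ := KM.rayleigh hA x
  set y := (star (hA.eigenvectorUnitary : Matrix (Fin k) (Fin k) ℝ) *ᵥ x) with hydef
  set S := ∑ i, (μ i)^2 with hS
  -- S equals x ⬝ A x
  have hSx : S = x ⬝ᵥ (A *ᵥ x) := by
    rw [hS, KM.sum_eig_sq hA]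
    simp only [Matrix.trace, Matrix.diag, Matrix.mul_apply, dotProduct, Matrix.mulVec,
      hx, mul_one, one_mul]
    refine Finset.sum_congr rfl fun i _ => Finset.sum_congr rfl fun j _ => ?_
    by_cases h : G.Adj i j
    · simp [hAdef, h, h.symm]
    · have h' : ¬ G.Adj j i := fun hh => h hh.symm
      simp [hAdef, h, h']
  -- sum of eigenvalues is zero
  have hsum0 : ∑ i, μ i = 0 := by
    rw [hμ, KM.sum_eig hA]; exact G.trace_adjMatrix ℝ
  -- choose the max eigenvalue
  obtain ⟨i0, -, hmax⟩ := Finset.exists_max_image (Finset.univ : Finset (Fin k)) μ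
    ⟨⟨0, hkpos⟩, Finset.mem_univ _⟩
  set t := μ i0 with ht
  have hmax' : ∀ i, μ i ≤ t := fun i => hmax i (Finset.mem_univ i)
  have hk1 : (1:ℝ) ≤ (k:ℝ) := by exact_mod_cast hkpos
  have hkR : (0:ℝ) < k := by linarith
  have hsumt : ∑ i, μ i ≤ (k:ℝ) * t := by
    calc ∑ i, μ i ≤ ∑ _i : Fin k, t := Finset.sum_le_sum (fun i _ => hmax' i)
      _ = (k:ℝ) * t := by simp [Finset.sum_const, nsmul_eq_mul]
  have ht0 : 0 ≤ t := by nlinarith [hsum0 ▸ hsumt]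
  have hxx : x ⬝ᵥ x = (k:ℝ) := by simp [hx, dotProduct]
  have hkt : S ≤ t * k := by
    have h1 : S = ∑ i, μ i * (y i)^2 := by rw [hSx, r1]
    have h2 : ∑ i, μ i * (y i)^2 ≤ ∑ i, t * (y i)^2 :=
      Finset.sum_le_sum (fun i _ => mul_le_mul_of_nonneg_right (hmax' i) (sq_nonneg _))
    have h3 : ∑ i, t * (y i)^2 = t * k := by
      rw [← Finset.mul_sum, ← r2, hxx]
    linarith
  have htS : t^2 ≤ S := by
    rw [hS, ht]
    exact Finset.single_le_sum (f := fun i => μ i ^ 2) (fun i _ => sq_nonneg _)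
      (Finset.mem_univ i0)
  have htk : t ≤ (k:ℝ) := by nlinarith
  set c : ℝ := 1 / 2 * (1 + Real.sqrt k) * k with hc
  have hs1 : (1:ℝ) ≤ Real.sqrt k := by
    rw [show (1:ℝ) = Real.sqrt 1 by simp]
    exact Real.sqrt_le_sqrt hk1
  have hsq : (Real.sqrt k)^2 = (k:ℝ) := Real.sq_sqrt (by positivity)
  have hct : t ≤ c := by nlinarith
  have herase : ∑ i ∈ Finset.univ.erase i0, (μ i)^2 = S - t^2 := by
    rw [hS, ht]
    exact Finset.sum_erase_eq_sub (Finset.mem_univ i0)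
  have hcard : ((Finset.univ.erase i0).card : ℝ) = (k:ℝ) - 1 := by
    rw [Finset.card_erase_of_mem (Finset.mem_univ i0)]
    simp only [Finset.card_univ, Fintype.card_fin]
    rw [Nat.cast_sub hkpos]
    simp
  have hCS : (∑ i ∈ Finset.univ.erase i0, |μ i|) ^ 2 ≤ ((k:ℝ) - 1) * (S - t^2) := by
    have := Finset.sum_mul_sq_le_sq_mul_sq (Finset.univ.erase i0) (fun i => |μ i|)
      (fun _ => (1:ℝ))
    simp only [mul_one, one_pow, Finset.sum_const, nsmul_eq_mul, sq_abs] at this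
    rw [herase] at this
    calc (∑ i ∈ Finset.univ.erase i0, |μ i|) ^ 2 ≤ (S - t^2) * ((Finset.univ.erase i0).card : ℝ)
        := this
      _ = ((k:ℝ) - 1) * (S - t^2) := by rw [hcard]; ring
  have hkey : ((k:ℝ) - 1) * (S - t^2) ≤ (c - t)^2 := by
    have h1 : ((k:ℝ) - 1) * (S - t^2) ≤ ((k:ℝ) - 1) * (t * k - t^2) :=
      mul_le_mul_of_nonneg_left (by linarith) (by linarith)
    have hcs : 2 * Real.sqrt k * c = 2 * c + (k:ℝ)^2 - k := by
      rw [hc]; linear_combination (k:ℝ) * hsq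
    have hcst : 2 * Real.sqrt k * c * t = (2 * c + (k:ℝ)^2 - k) * t := by rw [hcs]
    have h2 : (Real.sqrt k)^2 * t^2 = (k:ℝ) * t^2 := by rw [hsq]
    nlinarith [sq_nonneg (Real.sqrt k * t - c), h2, hcst, h1]
  have hfin : ∑ i ∈ Finset.univ.erase i0, |μ i| ≤ c - t := by
    have h0 : 0 ≤ ∑ i ∈ Finset.univ.erase i0, |μ i| :=
      Finset.sum_nonneg (fun i _ => abs_nonneg _)
    have h2 := Real.sqrt_le_sqrt (hCS.trans hkey)
    rwa [Real.sqrt_sq h0, Real.sqrt_sq (by linarith : (0:ℝ) ≤ c - t)] at h2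
  have hsplit : ∑ i, |μ i| = |μ i0| + ∑ i ∈ Finset.univ.erase i0, |μ i| :=
    (Finset.add_sum_erase _ _ (Finset.mem_univ i0)).symm
  rw [hsplit, abs_of_nonneg (ht ▸ ht0 : 0 ≤ μ i0), ← ht]
  linarith
end

section
/- If G is a graph with chromatic number χ ≥ 2 and order n, then the sum of the χ largest singular values of its adjacency matrix is at least 2μ₁(G), where μ₁(G) is the largest adjacency eigenvalue. -/
open Matrix BigOperators Polynomial

local notation "⟪" x ", " y "⟫" => @inner ℝ _ _ x y

lemma exists_subset_sum_le {α : Type*} [DecidableEq α] (I : Finset α) (f p : α → ℝ) (m : ℕ)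
    (hm : m ≤ I.card) (hp0 : ∀ i ∈ I, 0 ≤ p i) (hp1 : ∀ i ∈ I, p i ≤ 1)
    (hsum : ∑ i ∈ I, p i = m) :
    ∃ T ⊆ I, T.card = m ∧ ∑ i ∈ T, f i ≤ ∑ i ∈ I, f i * p i := by
  rcases Nat.eq_zero_or_pos m with hm0 | hmpos
  · refine ⟨∅, Finset.empty_subset _, by simp [hm0], ?_⟩
    have hp : ∀ i ∈ I, p i = 0 :=
      (Finset.sum_eq_zero_iff_of_nonneg hp0).1 (by rw [hsum, hm0]; simp)
    simp only [Finset.sum_empty]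
    rw [Finset.sum_congr rfl (fun i hi => by rw [hp i hi, mul_zero])]
    simp
  · obtain ⟨T₀, hT₀I, hT₀card⟩ := Finset.exists_subset_card_eq hm
    obtain ⟨T, hTmem, hTmin⟩ := Finset.exists_min_image (Finset.powersetCard m I)
      (fun s => ∑ i ∈ s, f i) ⟨T₀, Finset.mem_powersetCard.2 ⟨hT₀I, hT₀card⟩⟩
    rw [Finset.mem_powersetCard] at hTmem
    obtain ⟨hTI, hTcard⟩ := hTmem
    refine ⟨T, hTI, hTcard, ?_⟩
    have hex : ∀ i ∈ I \ T, ∀ j ∈ T, f j ≤ f i := by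
      intro i hi j hj
      rw [Finset.mem_sdiff] at hi
      have hins : insert i (T.erase j) ∈ Finset.powersetCard m I := by
        rw [Finset.mem_powersetCard]
        refine ⟨fun a ha => ?_, ?_⟩
        · rcases Finset.mem_insert.1 ha with rfl | ha
          · exact hi.1
          · exact hTI (Finset.mem_of_mem_erase ha)
        · rw [Finset.card_insert_of_notMem (fun h => hi.2 (Finset.mem_of_mem_erase h)),
            Finset.card_erase_of_mem hj, hTcard]
          omega
      have := hTmin _ hins
      rw [Finset.sum_insert (fun h => hi.2 (Finset.mem_of_mem_erase h)),
        Finset.sum_erase_eq_sub hj] at this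
      linarith
    have hTne : T.Nonempty := Finset.card_pos.1 (hTcard ▸ hmpos)
    obtain ⟨j₀, hj₀T, hj₀max⟩ := Finset.exists_max_image T f hTne
    set t := f j₀ with ht
    have e1 : ∑ i ∈ T, t * (p i - 1) ≤ ∑ i ∈ T, (f i * p i - f i) := by
      refine Finset.sum_le_sum fun i hi => ?_
      have h1 := hj₀max i hi
      have h2 := hp1 i (hTI hi)
      nlinarith
    have e2 : ∑ i ∈ I \ T, t * p i ≤ ∑ i ∈ I \ T, f i * p i := by
      refine Finset.sum_le_sum fun i hi => ?_
      have h1 := hex i hi j₀ hj₀T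
      have h2 := hp0 i (Finset.mem_sdiff.1 hi).1
      nlinarith
    have A1 : ∑ i ∈ T, (f i * p i - f i) = ∑ i ∈ T, f i * p i - ∑ i ∈ T, f i :=
      Finset.sum_sub_distrib _ _
    have A2 : ∑ i ∈ T, t * (p i - 1) = t * (∑ i ∈ T, p i) - m * t := by
      have : ∀ i, t * (p i - 1) = t * p i - t := fun i => by ring
      simp only [this]
      rw [Finset.sum_sub_distrib, ← Finset.mul_sum, Finset.sum_const, hTcard, nsmul_eq_mul]
    have A3 : ∑ i ∈ I \ T, t * p i = t * ∑ i ∈ I \ T, p i := by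
      rw [Finset.mul_sum]
    have A4 : ∑ i ∈ I \ T, p i + ∑ i ∈ T, p i = (m : ℝ) := by
      rw [Finset.sum_sdiff hTI, hsum]
    have A5 : ∑ i ∈ I \ T, (f i * p i) + ∑ i ∈ T, (f i * p i) = ∑ i ∈ I, f i * p i :=
      Finset.sum_sdiff hTI
    have A6 : t * (∑ i ∈ I \ T, p i) + t * (∑ i ∈ T, p i) = (m:ℝ) * t := by
      rw [← mul_add, A4]; ring
    linarith

lemma exists_perm_of_map_eq {n : ℕ} {f g : Fin n → ℝ}
    (h : Multiset.map f Finset.univ.val = Multiset.map g Finset.univ.val) :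
    ∃ σ : Equiv.Perm (Fin n), ∀ i, f (σ i) = g i := by
  classical
  have hcard : ∀ c : ℝ, Nonempty ({ a // g a = c } ≃ { b // f b = c }) := by
    intro c
    refine ⟨Fintype.equivOfCardEq ?_⟩
    have hc := congrArg (Multiset.count c) h
    rw [Multiset.count_map, Multiset.count_map] at hc
    rw [Fintype.card_subtype, Fintype.card_subtype]
    simp only [Finset.card, Finset.filter]
    convert hc.symm using 2 <;> simp [eq_comm]
  let e : ∀ c : ℝ, { a // g a = c } ≃ { b // f b = c } := fun c => (hcard c).some
  exact ⟨Equiv.ofFiberEquiv e, fun i => Equiv.ofFiberEquiv_map e i⟩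

lemma my_charpoly_diagonal {n : ℕ} (d : Fin n → ℝ) :
    (Matrix.diagonal d).charpoly = ∏ i, (X - C (d i)) := by
  rw [Matrix.charpoly]
  have : Matrix.charmatrix (Matrix.diagonal d) = Matrix.diagonal (fun i => X - C (d i)) := by
    ext i j
    by_cases hij : i = j
    · subst hij; simp [Matrix.charmatrix_apply_eq]
    · simp [Matrix.charmatrix_apply_ne _ _ _ hij, Matrix.diagonal_apply_ne _ hij]
  rw [this, Matrix.det_diagonal]

lemma my_charpoly_conj {n : ℕ} (U A V : Matrix (Fin n) (Fin n) ℝ) (hUV : U * V = 1) :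
    (U * A * V).charpoly = A.charpoly := by
  rw [Matrix.charpoly, Matrix.charpoly]
  have hdet : (U.map C) * (V.map C) = 1 := by
    rw [← Matrix.map_mul, hUV]
    simp
  have hscalar : (Matrix.scalar (Fin n)) (X : ℝ[X]) = (X : ℝ[X]) • (1 : Matrix (Fin n) (Fin n) ℝ[X]) := by
    ext i j
    by_cases hij : i = j
    · subst hij; simp
    · simp [Matrix.scalar_apply, Matrix.diagonal_apply_ne _ hij, Matrix.one_apply_ne hij]
  have key : Matrix.charmatrix (U * A * V) = (U.map C) * Matrix.charmatrix A * (V.map C) := by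
    unfold Matrix.charmatrix
    rw [_root_.map_mul, _root_.map_mul, Matrix.mul_sub, Matrix.sub_mul]
    congr 1
    rw [hscalar, mul_smul_comm, mul_one, smul_mul_assoc, hdet]
  rw [key, Matrix.det_mul, Matrix.det_mul]
  have : (U.map C).det * (V.map C).det = 1 := by
    rw [← Matrix.det_mul, hdet, Matrix.det_one]
  calc (U.map C).det * (Matrix.charmatrix A).det * (V.map C).det
      = (U.map C).det * (V.map C).det * (Matrix.charmatrix A).det := by ring
    _ = (Matrix.charmatrix A).det := by rw [this, one_mul]

lemma my_charpoly_hermitian {n : ℕ} {B : Matrix (Fin n) (Fin n) ℝ} (hB : B.IsHermitian) :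
    B.charpoly = ∏ i, (X - C (hB.eigenvalues i)) := by
  have hUV : (hB.eigenvectorUnitary : Matrix (Fin n) (Fin n) ℝ) *
      star (hB.eigenvectorUnitary : Matrix (Fin n) (Fin n) ℝ) = 1 := by
    simpa using (Matrix.mem_unitaryGroup_iff).mp hB.eigenvectorUnitary.2
  have hdiag : Matrix.diagonal (RCLike.ofReal ∘ hB.eigenvalues) =
      Matrix.diagonal hB.eigenvalues := by
    congr 1
  calc B.charpoly = ((hB.eigenvectorUnitary : Matrix (Fin n) (Fin n) ℝ) *
        Matrix.diagonal (RCLike.ofReal ∘ hB.eigenvalues) *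
        star (hB.eigenvectorUnitary : Matrix (Fin n) (Fin n) ℝ)).charpoly := by
        conv_lhs => rw [hB.spectral_theorem]
        rfl
    _ = (Matrix.diagonal (RCLike.ofReal ∘ hB.eigenvalues)).charpoly :=
        my_charpoly_conj _ _ _ hUV
    _ = ∏ i, (X - C (hB.eigenvalues i)) := by rw [hdiag, my_charpoly_diagonal]

lemma exists_perm_singularValues {n : ℕ} {A : Matrix (Fin n) (Fin n) ℝ} (hA : A.IsHermitian) :
    ∃ σ : Equiv.Perm (Fin n), ∀ i, singularValues A (σ i) = |hA.eigenvalues i| := by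
  set ν := (Matrix.isHermitian_mul_conjTranspose_self A).eigenvalues with hν
  set lam := hA.eigenvalues with hlam
  have hUV : (hA.eigenvectorUnitary : Matrix (Fin n) (Fin n) ℝ) *
      star (hA.eigenvectorUnitary : Matrix (Fin n) (Fin n) ℝ) = 1 := by
    simpa using (Matrix.mem_unitaryGroup_iff).mp hA.eigenvectorUnitary.2
  have hVU : star (hA.eigenvectorUnitary : Matrix (Fin n) (Fin n) ℝ) *
      (hA.eigenvectorUnitary : Matrix (Fin n) (Fin n) ℝ) = 1 :=
    mul_eq_one_comm.mp hUV
  have halg : ∀ (U D : Matrix (Fin n) (Fin n) ℝ), star U * U = 1 →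
      (U * D * star U) * (U * D * star U) = U * (D * D) * star U := by
    intro U D h
    calc (U * D * star U) * (U * D * star U) = U * D * ((star U * U) * D) * star U := by
          noncomm_ring
      _ = U * (D * D) * star U := by rw [h, one_mul]; noncomm_ring
  have hAA : A * Aᴴ = (hA.eigenvectorUnitary : Matrix (Fin n) (Fin n) ℝ) *
      Matrix.diagonal (fun i => lam i ^ 2) *
      star (hA.eigenvectorUnitary : Matrix (Fin n) (Fin n) ℝ) := by
    have hd : Matrix.diagonal (RCLike.ofReal ∘ lam) = Matrix.diagonal lam := by congr 1
    have hspec := hA.spectral_theorem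
    rw [hd] at hspec
    change A = (hA.eigenvectorUnitary : Matrix (Fin n) (Fin n) ℝ) * Matrix.diagonal lam *
      star (hA.eigenvectorUnitary : Matrix (Fin n) (Fin n) ℝ) at hspec
    have hAH : Aᴴ = A := hA
    rw [hAH]
    conv_lhs => rw [hspec]
    rw [halg _ _ hVU, Matrix.diagonal_mul_diagonal]
    congr 1
    ext i
    ring
  have hcp : (A * Aᴴ).charpoly = ∏ i, (X - C (lam i ^ 2)) := by
    rw [hAA, my_charpoly_conj _ _ _ hUV, my_charpoly_diagonal]
  have hcp2 : (A * Aᴴ).charpoly = ∏ i, (X - C (ν i)) :=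
    my_charpoly_hermitian _
  have hmult : Multiset.map ν Finset.univ.val =
      Multiset.map (fun i => lam i ^ 2) Finset.univ.val := by
    have h1 : (Multiset.map (fun a => X - C a) (Multiset.map ν Finset.univ.val)).prod =
        (Multiset.map (fun a => X - C a) (Multiset.map (fun i => lam i ^ 2) Finset.univ.val)).prod := by
      rw [Multiset.map_map, Multiset.map_map]
      calc (Multiset.map ((fun a => X - C a) ∘ ν) Finset.univ.val).prod
          = ∏ i, (X - C (ν i)) := rfl
        _ = ∏ i, (X - C (lam i ^ 2)) := by rw [← hcp2, hcp]
        _ = _ := rfl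
    have := congrArg Polynomial.roots h1
    rwa [Polynomial.roots_multiset_prod_X_sub_C, Polynomial.roots_multiset_prod_X_sub_C] at this
  obtain ⟨σ, hσ⟩ := exists_perm_of_map_eq hmult
  refine ⟨σ, fun i => ?_⟩
  rw [singularValues]
  rw [← hν, hσ i, Real.sqrt_sq_eq_abs]

lemma inner_eucl {ι : Type*} [Fintype ι] (x y : EuclideanSpace ℝ ι) :
    ⟪x, y⟫ = ∑ i, x i * y i := by
  simp [PiLp.inner_apply, RCLike.inner_apply, mul_comm]

lemma quad_form_eq {n : ℕ} (b : OrthonormalBasis (Fin n) ℝ (EuclideanSpace ℝ (Fin n)))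
    (T : EuclideanSpace ℝ (Fin n) →ₗ[ℝ] EuclideanSpace ℝ (Fin n)) (lam : Fin n → ℝ)
    (hTb : ∀ i, T (b i) = lam i • b i) (z : EuclideanSpace ℝ (Fin n)) :
    ⟪z, T z⟫ = ∑ i, lam i * (b.repr z i)^2 := by
  have hTz : T z = ∑ i, (b.repr z i * lam i) • b i := by
    conv_lhs => rw [← b.sum_repr z, map_sum]
    congr 1
    ext i
    rw [_root_.map_smul, hTb, smul_smul]
  rw [hTz, inner_sum]
  congr 1
  ext i
  rw [real_inner_smul_right, real_inner_comm, ← b.repr_apply_apply]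
  ring

lemma hoffman_sum {n χ : ℕ} (hn : 0 < n) (G : SimpleGraph (Fin n)) [DecidableRel G.Adj]
    (C : G.Coloring (Fin χ)) :
    ∃ S : Finset (Fin n), S.card ≤ χ ∧
      2 * (⨆ i, (adj_isHermitian G).eigenvalues i) ≤
        ∑ i ∈ S, |(adj_isHermitian G).eigenvalues i| := by
  classical
  have : Nonempty (Fin n) := ⟨⟨0, hn⟩⟩
  set hA := adj_isHermitian G with hhA
  set lam := hA.eigenvalues with hlam
  set b := hA.eigenvectorBasis with hb
  set T := Matrix.toEuclideanLin (G.adjMatrix ℝ) with hT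
  -- T on eigenbasis
  have hTb : ∀ i, T (b i) = lam i • b i := by
    intro i
    apply (WithLp.equiv 2 (Fin n → ℝ)).injective
    show WithLp.ofLp (Matrix.toEuclideanLin (G.adjMatrix ℝ) (b i)) = WithLp.ofLp (lam i • b i)
    rw [Matrix.ofLp_toEuclideanLin_apply]
    simpa using hA.mulVec_eigenvectorBasis i
  -- coordinates of T z
  have hTcoord : ∀ (z : EuclideanSpace ℝ (Fin n)) (v : Fin n),
      (T z) v = ∑ w, (G.adjMatrix ℝ) v w * z w := by
    intro z v
    rfl
  -- argmax
  obtain ⟨i₀, -, hi₀max⟩ := Finset.exists_max_image Finset.univ lam Finset.univ_nonempty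
  have hμ : (⨆ i, lam i) = lam i₀ := by
    apply le_antisymm
    · exact ciSup_le fun i => hi₀max i (Finset.mem_univ i)
    · exact le_ciSup (Set.Finite.bddAbove (Set.finite_range lam)) i₀
  set x := b i₀ with hx
  have hxx : ⟪x, x⟫ = 1 := by
    have h1 := b.orthonormal.1 i₀
    rw [real_inner_self_eq_norm_sq, h1]; norm_num
  -- color-class restrictions
  set xc : Fin χ → EuclideanSpace ℝ (Fin n) :=
    fun c => (WithLp.equiv 2 (Fin n → ℝ)).symm (fun v => if C v = c then x v else 0) with hxcdef
  have hxc_coord : ∀ c v, xc c v = if C v = c then x v else 0 := fun c v => rfl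
  set s : Fin χ → ℝ := fun c => ⟪xc c, xc c⟫ with hsdef
  have hs_eq : ∀ c, s c = ∑ v, (xc c v)^2 := by
    intro c
    rw [hsdef]
    simp only
    rw [inner_eucl]
    congr 1; ext v; ring
  have hs_nonneg : ∀ c, 0 ≤ s c := fun c => by
    rw [hs_eq]; exact Finset.sum_nonneg fun v _ => sq_nonneg _
  have hsum_s : ∑ c, s c = 1 := by
    simp only [hs_eq]
    rw [Finset.sum_comm]
    rw [← hxx, inner_eucl]
    congr 1; ext v
    rw [Finset.sum_eq_single (C v)]
    · rw [hxc_coord]; simp; ring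
    · intro c _ hc; rw [hxc_coord]; simp [Ne.symm hc]
    · intro h; exact absurd (Finset.mem_univ _) h
  have hxc_zero : ∀ c, s c = 0 → xc c = 0 := by
    intro c hc
    have : ⟪xc c, xc c⟫ = 0 := hc
    exact inner_self_eq_zero.mp this
  have hxc_orth : ∀ c d, c ≠ d → ⟪xc c, xc d⟫ = 0 := by
    intro c d hcd
    rw [inner_eucl]
    apply Finset.sum_eq_zero
    intro v _
    rw [hxc_coord, hxc_coord]
    by_cases h1 : C v = c
    · rw [if_pos h1, if_neg (fun h : C v = d => hcd (h1.symm.trans h))]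
      ring
    · rw [if_neg h1]; ring
  have hxcq : ∀ c, ⟪xc c, T (xc c)⟫ = 0 := by
    intro c
    rw [inner_eucl]
    apply Finset.sum_eq_zero
    intro v _
    rw [hTcoord]
    rw [Finset.mul_sum]
    apply Finset.sum_eq_zero
    intro w _
    rw [hxc_coord, hxc_coord]
    by_cases h1 : C v = c
    · by_cases h2 : C w = c
      · have hAvw : (G.adjMatrix ℝ) v w = 0 := by
          rw [SimpleGraph.adjMatrix_apply, if_neg]
          intro hadj
          exact C.valid hadj (h1.trans h2.symm)
        rw [hAvw]; ring
      · rw [if_neg h2]; ring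
    · rw [if_neg h1]; ring
  have hx_decomp : ∀ v, ∑ c, xc c v = x v := by
    intro v
    rw [Finset.sum_eq_single (C v)]
    · rw [hxc_coord, if_pos rfl]
    · intro c _ hc; rw [hxc_coord, if_neg (fun h => hc h.symm)]
    · intro h; exact absurd (Finset.mem_univ _) h
  -- the nonzero color classes
  set J : Finset (Fin χ) := Finset.univ.filter (fun c => s c ≠ 0) with hJdef
  have hJmem : ∀ c, c ∈ J ↔ s c ≠ 0 := by
    intro c; rw [hJdef]; simp
  have hs_pos : ∀ c : {c // c ∈ J}, 0 < s c.1 := by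
    intro c
    exact lt_of_le_of_ne (hs_nonneg c.1) (Ne.symm ((hJmem c.1).mp c.2))
  have hsum_sJ : ∑ c ∈ J, s c = 1 := by
    rw [← hsum_s]
    apply Finset.sum_subset (Finset.subset_univ J)
    intro c _ hc
    rw [hJmem] at hc
    push_neg at hc
    exact hc
  have hJne : J.Nonempty := by
    by_contra h
    rw [Finset.not_nonempty_iff_eq_empty] at h
    rw [h, Finset.sum_empty] at hsum_sJ
    norm_num at hsum_sJ
  -- normalized class vectors
  set w : {c // c ∈ J} → EuclideanSpace ℝ (Fin n) :=
    fun c => (Real.sqrt (s c.1))⁻¹ • xc c.1 with hwdef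
  have hsqrt_pos : ∀ c : {c // c ∈ J}, 0 < Real.sqrt (s c.1) :=
    fun c => Real.sqrt_pos.mpr (hs_pos c)
  have hw_inner : ∀ c d, ⟪w c, w d⟫ = if c = d then 1 else 0 := by
    intro c d
    rw [hwdef]
    simp only
    rw [real_inner_smul_left, real_inner_smul_right]
    by_cases hcd : c = d
    · subst hcd
      rw [if_pos rfl, show ⟪xc c.1, xc c.1⟫ = s c.1 from rfl]
      have hss := Real.mul_self_sqrt (le_of_lt (hs_pos c))
      have hne := (hsqrt_pos c).ne'
      field_simp
      rw [Real.sq_sqrt (le_of_lt (hs_pos c))]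
    · rw [if_neg hcd, hxc_orth c.1 d.1 (fun h => hcd (Subtype.ext h))]
      ring
  have hwq : ∀ c, ⟪w c, T (w c)⟫ = 0 := by
    intro c
    rw [hwdef]
    simp only
    rw [_root_.map_smul, real_inner_smul_left, real_inner_smul_right, hxcq]
    ring
  -- the unit vector of norms
  set γ : EuclideanSpace ℝ {c // c ∈ J} :=
    (WithLp.equiv 2 ({c // c ∈ J} → ℝ)).symm (fun c => Real.sqrt (s c.1)) with hγdef
  have hγ_coord : ∀ c, γ c = Real.sqrt (s c.1) := fun c => rfl
  have hγγ : ⟪γ, γ⟫ = 1 := by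
    rw [inner_eucl]
    have : ∀ c : {c // c ∈ J}, γ c * γ c = s c.1 := by
      intro c
      rw [hγ_coord, Real.mul_self_sqrt (le_of_lt (hs_pos c))]
    rw [Finset.sum_congr rfl (fun c _ => this c)]
    rw [← Finset.sum_coe_sort J s] at hsum_sJ
    exact hsum_sJ
  have hγnorm : ‖γ‖ = 1 := by
    have h1 : ‖γ‖^2 = 1 := by rw [← real_inner_self_eq_norm_sq]; exact hγγ
    nlinarith [norm_nonneg γ]
  obtain ⟨c₀, hc₀⟩ := hJne
  set j₀ : {c // c ∈ J} := ⟨c₀, hc₀⟩ with hj₀def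
  -- extend γ to an orthonormal basis
  have hcard : Module.finrank ℝ (EuclideanSpace ℝ {c // c ∈ J}) = Fintype.card {c // c ∈ J} :=
    finrank_euclideanSpace
  have horth : Orthonormal ℝ (Set.restrict {j₀} (fun _ : {c // c ∈ J} => γ)) := by
    constructor
    · intro i; exact hγnorm
    · intro i j hij
      exfalso
      apply hij
      apply Subtype.ext
      rw [i.2, j.2]
  obtain ⟨β, hβj₀⟩ := horth.exists_orthonormalBasis_extension_of_card_eq hcard
  have hβγ : β j₀ = γ := hβj₀ j₀ rfl
  -- the orthonormal vectors
  set V : {c // c ∈ J} → EuclideanSpace ℝ (Fin n) :=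
    fun j => ∑ c, (β j c) • w c with hVdef
  have hV_inner : ∀ j j', ⟪V j, V j'⟫ = if j = j' then 1 else 0 := by
    intro j j'
    rw [hVdef]
    simp only
    rw [sum_inner]
    have : ∀ c, ⟪β j c • w c, ∑ d, β j' d • w d⟫ = β j c * β j' c := by
      intro c
      rw [inner_sum]
      rw [Finset.sum_eq_single c]
      · rw [real_inner_smul_left, real_inner_smul_right, hw_inner, if_pos rfl]; ring
      · intro d _ hdc
        rw [real_inner_smul_left, real_inner_smul_right, hw_inner, if_neg (Ne.symm hdc)]; ring
      · intro h; exact absurd (Finset.mem_univ _) h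
    rw [Finset.sum_congr rfl (fun c _ => this c)]
    have hβo := β.orthonormal
    rw [orthonormal_iff_ite] at hβo
    have := hβo j j'
    rw [inner_eucl] at this
    exact this
  -- V j₀ = x
  have hVj₀ : V j₀ = x := by
    rw [hVdef]
    simp only [hβγ]
    have h1 : ∀ c : {c // c ∈ J}, γ c • w c = xc c.1 := by
      intro c
      rw [hγ_coord, hwdef]
      simp only
      rw [smul_smul, mul_inv_cancel₀ (hsqrt_pos c).ne', one_smul]
    rw [Finset.sum_congr rfl (fun c _ => h1 c)]
    apply PiLp.ext
    intro v
    have hsum_apply : (∑ c : {c // c ∈ J}, xc c.1) v = ∑ c : {c // c ∈ J}, xc c.1 v := by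
      rw [WithLp.ofLp_sum]
      exact Finset.sum_apply v Finset.univ _
    rw [hsum_apply]
    rw [← hx_decomp v]
    rw [Finset.sum_coe_sort J (fun c => xc c v)]
    apply Finset.sum_subset (Finset.subset_univ J)
    intro c _ hc
    rw [hJmem] at hc
    push_neg at hc
    rw [hxc_zero c hc]
    rfl
  -- trace identity: sum of quadratic forms over all V j is 0
  have hVq : ∀ j, ⟪V j, T (V j)⟫ = ∑ c, ∑ d, β j c * β j d * ⟪w c, T (w d)⟫ := by
    intro j
    rw [hVdef]
    simp only
    rw [map_sum, sum_inner]
    congr 1; ext c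
    rw [inner_sum]
    congr 1; ext d
    rw [_root_.map_smul, real_inner_smul_left, real_inner_smul_right]
    ring
  have hVq_total : ∑ j, ⟪V j, T (V j)⟫ = 0 := by
    rw [Finset.sum_congr rfl (fun j _ => hVq j)]
    rw [Finset.sum_comm]
    have hswap : ∀ c, ∑ j, ∑ d, β j c * β j d * ⟪w c, T (w d)⟫
        = ∑ d, (∑ j, β j c * β j d) * ⟪w c, T (w d)⟫ := by
      intro c
      rw [Finset.sum_comm]
      congr 1; ext d
      rw [Finset.sum_mul]
    rw [Finset.sum_congr rfl (fun c _ => hswap c)]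
    apply Finset.sum_eq_zero
    intro c _
    have hcol : ∀ d, (∑ j, β j c * β j d) = if c = d then 1 else 0 := by
      intro d
      have h1 := β.sum_inner_mul_inner (EuclideanSpace.single c (1:ℝ))
        (EuclideanSpace.single d (1:ℝ))
      have h2 : ∀ j, ⟪EuclideanSpace.single c (1:ℝ), β j⟫ = β j c := by
        intro j
        rw [EuclideanSpace.inner_single_left]
        simp
      have h3 : ∀ j, ⟪β j, EuclideanSpace.single d (1:ℝ)⟫ = β j d := by
        intro j
        rw [EuclideanSpace.inner_single_right]
        simp
      rw [Finset.sum_congr rfl (fun j _ => by rw [← h2 j, ← h3 j])]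
      rw [h1, EuclideanSpace.inner_single_left]
      simp [EuclideanSpace.single_apply, eq_comm]
    apply Finset.sum_eq_zero
    intro d _
    by_cases hcd : c = d
    · subst hcd
      rw [hwq]
      ring
    · rw [hcol d, if_neg hcd]
      ring
  -- q(x) = lam i₀
  have hqx : ⟪x, T x⟫ = lam i₀ := by
    rw [hx, hTb i₀, real_inner_smul_right, hxx]
    ring
  have hVq_rest : ∑ j ∈ Finset.univ.erase j₀, ⟪V j, T (V j)⟫ = -(lam i₀) := by
    have := Finset.add_sum_erase Finset.univ (fun j => ⟪V j, T (V j)⟫) (Finset.mem_univ j₀)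
    rw [hVq_total, hVj₀, hqx] at this
    linarith
  -- the weights p
  set p : Fin n → ℝ := fun i => ∑ j ∈ Finset.univ.erase j₀, (b.repr (V j) i)^2 with hpdef
  have hp0 : ∀ i, 0 ≤ p i := fun i => Finset.sum_nonneg fun j _ => sq_nonneg _
  have hVorth : Orthonormal ℝ V := by
    rw [orthonormal_iff_ite]
    exact hV_inner
  have hp1 : ∀ i, p i ≤ 1 := by
    intro i
    have hb1 : ‖b i‖ = 1 := b.orthonormal.1 i
    have := hVorth.sum_inner_products_le (b i) (s := Finset.univ.erase j₀)
    rw [hb1] at this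
    calc p i = ∑ j ∈ Finset.univ.erase j₀, ‖⟪V j, b i⟫‖^2 := by
          apply Finset.sum_congr rfl
          intro j _
          rw [b.repr_apply_apply, real_inner_comm, Real.norm_eq_abs, sq_abs]
      _ ≤ 1^2 := this
      _ = 1 := one_pow 2
  -- Parseval : each V j has repr-norm 1
  have hrepr_sq : ∀ (z : EuclideanSpace ℝ (Fin n)), ∑ i, (b.repr z i)^2 = ⟪z, z⟫ := by
    intro z
    have h1 := b.sum_inner_mul_inner z z
    rw [← h1]
    apply Finset.sum_congr rfl
    intro i _
    rw [b.repr_apply_apply, real_inner_comm z (b i)]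
    ring
  have hpsum : ∑ i, p i = (Finset.univ.erase j₀).card := by
    rw [hpdef]
    simp only
    rw [Finset.sum_comm]
    rw [Finset.sum_congr rfl (fun j _ => hrepr_sq (V j))]
    rw [Finset.sum_congr rfl (fun j hj => by rw [hV_inner j j, if_pos rfl])]
    rw [Finset.sum_const, nsmul_eq_mul, mul_one]
  have hpi₀ : p i₀ = 0 := by
    rw [hpdef]
    simp only
    apply Finset.sum_eq_zero
    intro j hj
    have : b.repr (V j) i₀ = 0 := by
      rw [b.repr_apply_apply, ← hx, ← hVj₀, hV_inner j₀ j,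
        if_neg (fun h => (Finset.mem_erase.mp hj).1 h.symm)]
    rw [this]
    ring
  have hlamp : ∑ i, lam i * p i = -(lam i₀) := by
    rw [← hVq_rest]
    rw [hpdef]
    simp only
    rw [Finset.sum_congr rfl (fun j hj => (quad_form_eq b T lam hTb (V j) : _))]
    rw [Finset.sum_comm]
    congr 1; ext i
    rw [Finset.mul_sum]
  -- cardinality bounds
  have hJcard_n : J.card ≤ n := by
    have hex : ∀ c : {c // c ∈ J}, ∃ v, C v = c.1 := by
      intro c
      by_contra h
      push_neg at h
      have hzero : s c.1 = 0 := by
        rw [hs_eq]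
        apply Finset.sum_eq_zero
        intro v _
        rw [hxc_coord, if_neg (h v)]
        ring
      exact (hJmem c.1).mp c.2 hzero
    choose φ hφ using hex
    have hinj : Function.Injective φ := fun a a' haa => Subtype.ext (by rw [← hφ a, ← hφ a', haa])
    calc J.card = Fintype.card {c // c ∈ J} := (Fintype.card_coe J).symm
      _ ≤ Fintype.card (Fin n) := Fintype.card_le_of_injective φ hinj
      _ = n := Fintype.card_fin n
  have hJcard_χ : J.card ≤ χ := by
    calc J.card ≤ Finset.univ.card := Finset.card_le_univ J
      _ = χ := by rw [Finset.card_univ, Fintype.card_fin]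
  set m := (Finset.univ.erase j₀).card with hmdef
  have hmcard : m = J.card - 1 := by
    rw [hmdef, Finset.card_erase_of_mem (Finset.mem_univ j₀), Finset.card_univ, Fintype.card_coe]
  have hJpos : 1 ≤ J.card := Finset.card_pos.mpr ⟨c₀, hc₀⟩
  set I : Finset (Fin n) := Finset.univ.erase i₀ with hIdef
  have hIcard : I.card = n - 1 := by
    rw [hIdef, Finset.card_erase_of_mem (Finset.mem_univ i₀), Finset.card_univ, Fintype.card_fin]
  have hmI : m ≤ I.card := by
    rw [hIcard, hmcard]
    omega
  have hpsumI : ∑ i ∈ I, p i = (m : ℝ) := by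
    have h1 := Finset.add_sum_erase Finset.univ p (Finset.mem_univ i₀)
    rw [hpsum] at h1
    rw [hIdef]
    rw [hpi₀, zero_add] at h1
    exact h1
  have hlampI : ∑ i ∈ I, lam i * p i = -(lam i₀) := by
    have h1 := Finset.add_sum_erase Finset.univ (fun i => lam i * p i) (Finset.mem_univ i₀)
    rw [hlamp, hpi₀, mul_zero, zero_add] at h1
    rw [hIdef, h1]
  obtain ⟨Tset, hTI, hTcard, hTle⟩ := exists_subset_sum_le I lam p m hmI
    (fun i _ => hp0 i) (fun i _ => hp1 i) hpsumI
  rw [hlampI] at hTle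
  have hi₀T : i₀ ∉ Tset := fun h => (Finset.mem_erase.mp (hTI h)).1 rfl
  refine ⟨insert i₀ Tset, ?_, ?_⟩
  · rw [Finset.card_insert_of_notMem hi₀T, hTcard, hmcard]
    omega
  · rw [hμ, Finset.sum_insert hi₀T]
    have h1 : ∑ i ∈ Tset, (-(lam i)) ≤ ∑ i ∈ Tset, |lam i| :=
      Finset.sum_le_sum fun i _ => neg_le_abs (lam i)
    have h2 : ∑ i ∈ Tset, (-(lam i)) = -(∑ i ∈ Tset, lam i) := by
      rw [Finset.sum_neg_distrib]
    have h3 : lam i₀ ≤ |lam i₀| := le_abs_self _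
    linarith [hTle, h1, h2, h3]

theorem kyFan_chromatic_ge (n : ℕ) (G : SimpleGraph (Fin n)) [DecidableRel G.Adj]
    (χ : ℕ) (hχ : G.chromaticNumber = χ) (h2 : 2 ≤ χ) :
    2 * (⨆ i, (adj_isHermitian G).eigenvalues i) ≤ kyFan χ (G.adjMatrix ℝ) := by
  classical
  set hA := adj_isHermitian G with hhA
  set lam := hA.eigenvalues with hlam
  -- χ ≤ n
  have hχn : χ ≤ n := by
    have hcol : G.chromaticNumber ≤ (n : ℕ∞) := by
      have := SimpleGraph.chromaticNumber_le_card (G := G)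
      simpa using this
    rw [hχ] at hcol
    exact_mod_cast hcol
  have hn : 0 < n := by omega
  -- a coloring with χ colors
  have hcolorable : G.Colorable χ := SimpleGraph.chromaticNumber_le_iff_colorable.mp (le_of_eq hχ)
  obtain ⟨C⟩ := hcolorable
  -- Hoffman-type bound
  obtain ⟨S, hScard, hSsum⟩ := hoffman_sum hn G C
  -- transfer to singular values
  obtain ⟨σ, hσ⟩ := exists_perm_singularValues hA
  set A := G.adjMatrix ℝ
  have himage : ∑ i ∈ S.image σ, singularValues A i = ∑ i ∈ S, |lam i| := by
    rw [Finset.sum_image (fun a _ a' _ h => σ.injective h)]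
    exact Finset.sum_congr rfl fun i _ => hσ i
  have himgcard : (S.image σ).card = S.card :=
    Finset.card_image_of_injective S σ.injective
  obtain ⟨S₃, hsub, hS₃card⟩ := Finset.exists_superset_card_eq
    (s := S.image σ) (n := χ) (by omega) (by simpa using hχn)
  have hmono : ∑ i ∈ S.image σ, singularValues A i ≤ ∑ i ∈ S₃, singularValues A i := by
    apply Finset.sum_le_sum_of_subset_of_nonneg hsub
    intro i _ _
    exact Real.sqrt_nonneg _
  have hmem : (∑ i ∈ S₃, singularValues A i) ∈
      ((fun s : Finset (Fin n) => ∑ i ∈ s, singularValues A i) '' {s | s.card = χ}) :=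
    ⟨S₃, hS₃card, rfl⟩
  have hbdd : BddAbove ((fun s : Finset (Fin n) => ∑ i ∈ s, singularValues A i) ''
      {s | s.card = χ}) :=
    Set.Finite.bddAbove ((Set.toFinite _).image _)
  calc 2 * (⨆ i, lam i) ≤ ∑ i ∈ S, |lam i| := hSsum
    _ = ∑ i ∈ S.image σ, singularValues A i := himage.symm
    _ ≤ ∑ i ∈ S₃, singularValues A i := hmono
    _ ≤ kyFan χ A := le_csSup hbdd hmem
end

section
/- Let n ≥ m ≥ 2, m ≥ k ≥ 1, and let A be a nonnegative real m×n matrix. Then ‖A‖_{F_k} ≤ (1/2)(1 + √k)·√(mn)·max_{i,j} a_{ij}. -/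
open Matrix BigOperators

/-- Rayleigh quotient bound: for a real symmetric matrix, the quadratic form is bounded by the
largest eigenvalue times the squared norm. -/
lemma rayleigh_le' {p : ℕ} {B : Matrix (Fin p) (Fin p) ℝ} (hB : B.IsHermitian)
    {i₀ : Fin p} (hmax : ∀ i, hB.eigenvalues i ≤ hB.eigenvalues i₀) (x : Fin p → ℝ) :
    x ⬝ᵥ (B *ᵥ x) ≤ hB.eigenvalues i₀ * (x ⬝ᵥ x) := by
  classical
  set U : Matrix (Fin p) (Fin p) ℝ := (hB.eigenvectorUnitary : Matrix (Fin p) (Fin p) ℝ) with hU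
  have hstar : star U = Uᵀ := (conjTranspose_eq_transpose_of_trivial U)
  have h1 : U * Uᵀ = 1 := by
    rw [← hstar]; exact Unitary.coe_mul_star_self hB.eigenvectorUnitary
  set y : Fin p → ℝ := Uᵀ *ᵥ x with hy
  have hyy : y ⬝ᵥ y = x ⬝ᵥ x := by
    calc y ⬝ᵥ y = (y ᵥ* Uᵀ) ⬝ᵥ x := by rw [hy, dotProduct_mulVec]
    _ = (U *ᵥ y) ⬝ᵥ x := by rw [vecMul_transpose]
    _ = ((U * Uᵀ) *ᵥ x) ⬝ᵥ x := by rw [hy, mulVec_mulVec]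
    _ = x ⬝ᵥ x := by rw [h1, one_mulVec]
  have hspec : B = U * diagonal hB.eigenvalues * Uᵀ := by
    have := hB.spectral_theorem
    rw [Unitary.conjStarAlgAut_apply] at this
    rw [hstar] at this
    simpa [RCLike.ofReal_real_eq_id] using this
  have hxBx : x ⬝ᵥ (B *ᵥ x) = ∑ i, hB.eigenvalues i * y i ^ 2 := by
    calc x ⬝ᵥ (B *ᵥ x)
        = x ⬝ᵥ (U *ᵥ (diagonal hB.eigenvalues *ᵥ (Uᵀ *ᵥ x))) := by
          conv_lhs => rw [hspec]
          rw [← mulVec_mulVec, ← mulVec_mulVec]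
    _ = (x ᵥ* U) ⬝ᵥ (diagonal hB.eigenvalues *ᵥ y) := by rw [dotProduct_mulVec, hy]
    _ = y ⬝ᵥ (diagonal hB.eigenvalues *ᵥ y) := by rw [hy, mulVec_transpose]
    _ = ∑ i, hB.eigenvalues i * y i ^ 2 := by
        simp [dotProduct, mulVec_diagonal]
        exact Finset.sum_congr rfl fun i _ => by ring
  rw [hxBx, ← hyy]
  have : (y ⬝ᵥ y) = ∑ i, y i ^ 2 := by simp [dotProduct, sq]
  rw [this, Finset.mul_sum]
  exact Finset.sum_le_sum fun i _ =>
    mul_le_mul_of_nonneg_right (hmax i) (sq_nonneg _)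

/-- The sum of the eigenvalues of a real symmetric matrix equals its trace. -/
lemma sum_eigenvalues_eq_trace' {p : ℕ} {B : Matrix (Fin p) (Fin p) ℝ} (hB : B.IsHermitian) :
    ∑ i, hB.eigenvalues i = B.trace := by
  classical
  set U : Matrix (Fin p) (Fin p) ℝ := (hB.eigenvectorUnitary : Matrix (Fin p) (Fin p) ℝ) with hU
  have hstar : star U = Uᵀ := (conjTranspose_eq_transpose_of_trivial U)
  have h2 : Uᵀ * U = 1 := by
    rw [← hstar]; exact Unitary.coe_star_mul_self hB.eigenvectorUnitary
  have hspec : B = U * diagonal hB.eigenvalues * Uᵀ := by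
    have := hB.spectral_theorem
    rw [Unitary.conjStarAlgAut_apply] at this
    rw [hstar] at this
    simpa [RCLike.ofReal_real_eq_id] using this
  conv_rhs => rw [hspec]
  rw [trace_mul_cycle, h2, one_mul, trace_diagonal]

/-- The key scalar/combinatorial estimate: if `σ` is a nonnegative family maximized at `i₀`
with `∑ σ² ≤ σ i₀ * N`, then any `k`-term sum of `σ` is at most `(1/2)(1+√k)N`. -/
lemma sum_le_aux {m k : ℕ} (hk1 : 1 ≤ k) (σ : Fin m → ℝ) (i₀ : Fin m)
    (hσ0 : ∀ i, 0 ≤ σ i) (hi₀ : ∀ i, σ i ≤ σ i₀) (N : ℝ) (hN0 : 0 ≤ N)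
    (hkey : ∑ i, σ i ^ 2 ≤ σ i₀ * N)
    (s : Finset (Fin m)) (hs : s.card = k) :
    ∑ i ∈ s, σ i ≤ (1 / 2) * (1 + Real.sqrt k) * N := by
  classical
  set F2 : ℝ := ∑ i, σ i ^ 2 with hF2
  set x : ℝ := σ i₀ with hxdef
  have hx0 : 0 ≤ x := hσ0 i₀
  have hx2F2 : x ^ 2 ≤ F2 := Finset.single_le_sum (f := fun i => σ i ^ 2)
    (fun i _ => sq_nonneg _) (Finset.mem_univ i₀)
  have hxN : x ≤ N := by
    rcases eq_or_lt_of_le hx0 with h | h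
    · rw [← h]; exact hN0
    · nlinarith
  obtain ⟨t, hti₀, htcard, hsum⟩ : ∃ t : Finset (Fin m), i₀ ∉ t ∧ t.card = k - 1 ∧
      ∑ i ∈ s, σ i ≤ x + ∑ i ∈ t, σ i := by
    by_cases hmem : i₀ ∈ s
    · exact ⟨s.erase i₀, Finset.notMem_erase _ _, by rw [Finset.card_erase_of_mem hmem, hs],
        le_of_eq (Finset.add_sum_erase _ _ hmem).symm⟩
    · have hsne : s.Nonempty := Finset.card_pos.mp (by omega)
      obtain ⟨j, hj⟩ := hsne
      refine ⟨s.erase j, fun h => hmem (Finset.mem_of_mem_erase h),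
        by rw [Finset.card_erase_of_mem hj, hs], ?_⟩
      rw [← Finset.add_sum_erase _ _ hj]
      exact add_le_add_left (hi₀ j) _
  have htsum_sq : ∑ i ∈ t, σ i ^ 2 ≤ F2 - x ^ 2 := by
    have h1 : x ^ 2 + ∑ i ∈ t, σ i ^ 2 = ∑ i ∈ insert i₀ t, σ i ^ 2 := by
      rw [hxdef]; exact (Finset.sum_insert (f := fun i => σ i ^ 2) hti₀).symm
    have hle : ∑ i ∈ insert i₀ t, σ i ^ 2 ≤ F2 :=
      Finset.sum_le_sum_of_subset_of_nonneg (Finset.subset_univ _) fun i _ _ => sq_nonneg _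
    linarith
  have hk1' : (1:ℝ) ≤ (k:ℝ) := by exact_mod_cast hk1
  have hcs2 : (∑ i ∈ t, σ i) ^ 2 ≤ ((k:ℝ) - 1) * (F2 - x ^ 2) := by
    have h1 := sq_sum_le_card_mul_sum_sq (s := t) (f := σ)
    have h3 : (t.card : ℝ) = (k : ℝ) - 1 := by
      rw [htcard]; push_cast [Nat.cast_sub hk1]; ring
    calc (∑ i ∈ t, σ i) ^ 2 ≤ (t.card : ℝ) * ∑ i ∈ t, σ i ^ 2 := h1
    _ ≤ ((k:ℝ) - 1) * (F2 - x ^ 2) := by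
        rw [h3]
        exact mul_le_mul_of_nonneg_left htsum_sq (by linarith)
  set T := ∑ i ∈ t, σ i with hT
  have hT0 : 0 ≤ T := Finset.sum_nonneg fun i _ => hσ0 i
  set K := Real.sqrt k with hKdef
  have hK : K ^ 2 = k := Real.sq_sqrt (by positivity)
  have hK1 : (1:ℝ) ≤ K := by
    rw [hKdef, show (1:ℝ) = Real.sqrt 1 by simp]
    exact Real.sqrt_le_sqrt hk1'
  have hT2 : T ^ 2 ≤ ((k:ℝ) - 1) * (x * N - x ^ 2) := by nlinarith
  have hgoal : x + T ≤ (1 / 2) * (1 + K) * N := by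
    have hpos : 0 ≤ (1 + K) * N - 2 * x := by nlinarith
    nlinarith [sq_nonneg ((1 + K) * N - 2 * K * x), sq_nonneg T]
  linarith [hsum]

theorem kyFan_le_of_nonneg (m n k : ℕ) (hm : 2 ≤ m) (hmn : m ≤ n)
    (hk1 : 1 ≤ k) (hkm : k ≤ m) (A : Matrix (Fin m) (Fin n) ℝ)
    (hA : ∀ i j, 0 ≤ A i j) :
    kyFan k A ≤ (1 / 2) * (1 + Real.sqrt k) * Real.sqrt (m * n) * ⨆ i, ⨆ j, A i j := by
  classical
  have hmpos : 0 < m := by omega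
  have hnpos : 0 < n := by omega
  set M : ℝ := ⨆ i, ⨆ j, A i j with hM
  have hMub : ∀ i j, A i j ≤ M := by
    intro i j
    have h1 : A i j ≤ ⨆ j, A i j := le_ciSup (Finite.bddAbove_range _) j
    have h2 : (⨆ j, A i j) ≤ M := le_ciSup (Finite.bddAbove_range fun i => ⨆ j, A i j) i
    exact h1.trans h2
  have hM0 : 0 ≤ M := le_trans (hA ⟨0, hmpos⟩ ⟨0, hnpos⟩) (hMub _ _)
  have hB : (A * Aᴴ).IsHermitian := Matrix.isHermitian_mul_conjTranspose_self A
  set lam : Fin m → ℝ := hB.eigenvalues with hlam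
  have hlam0 : ∀ i, 0 ≤ lam i := fun i =>
    (Matrix.posSemidef_self_mul_conjTranspose A).eigenvalues_nonneg i
  have hσ_eq : ∀ i, singularValues A i = Real.sqrt (lam i) := fun i => rfl
  have hσ0 : ∀ i, 0 ≤ singularValues A i := fun i => Real.sqrt_nonneg _
  have hσsq : ∀ i, singularValues A i ^ 2 = lam i := fun i => by
    rw [hσ_eq i]; exact Real.sq_sqrt (hlam0 i)
  have hF2_eq : ∑ i, lam i = ∑ i, ∑ j, A i j ^ 2 := by
    rw [hlam, sum_eigenvalues_eq_trace' hB]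
    simp [Matrix.trace, Matrix.mul_apply, Matrix.diag, sq]
  set S : ℝ := ∑ i, ∑ j, A i j with hS
  have hS0 : 0 ≤ S := Finset.sum_nonneg fun i _ => Finset.sum_nonneg fun j _ => hA i j
  have hF2_le : ∑ i, lam i ≤ M * S := by
    rw [hF2_eq, hS, Finset.mul_sum]
    refine Finset.sum_le_sum fun i _ => ?_
    rw [Finset.mul_sum]
    exact Finset.sum_le_sum fun j _ => by
      have := hMub i j; have := hA i j; nlinarith
  -- pick the index of the largest eigenvalue
  obtain ⟨i₀, -, hi₀⟩ := Finset.exists_max_image (Finset.univ : Finset (Fin m)) lam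
    ⟨⟨0, hmpos⟩, Finset.mem_univ _⟩
  have hi₀' : ∀ i, lam i ≤ lam i₀ := fun i => hi₀ i (Finset.mem_univ i)
  have hi₀σ : ∀ i, singularValues A i ≤ singularValues A i₀ := fun i => by
    rw [hσ_eq i, hσ_eq i₀]; exact Real.sqrt_le_sqrt (hi₀' i)
  -- Rayleigh quotient bound with the all-ones vector
  have hray : S ^ 2 ≤ lam i₀ * ((m:ℝ) * n) := by
    have h1 : (fun _ : Fin m => (1:ℝ)) ⬝ᵥ ((A * Aᴴ) *ᵥ fun _ => 1) ≤
        lam i₀ * ((fun _ : Fin m => (1:ℝ)) ⬝ᵥ fun _ => 1) := rayleigh_le' hB hi₀' _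
    have hd : (fun _ : Fin m => (1:ℝ)) ⬝ᵥ ((A * Aᴴ) *ᵥ fun _ => 1) =
        ∑ j, (∑ i, A i j) ^ 2 := by
      calc (fun _ : Fin m => (1:ℝ)) ⬝ᵥ ((A * Aᴴ) *ᵥ fun _ => 1)
          = ∑ i, ∑ i', ∑ j, A i j * A i' j := by
            simp [dotProduct, Matrix.mulVec, Matrix.mul_apply, dotProduct]
      _ = ∑ i, ∑ j, ∑ i', A i j * A i' j := Finset.sum_congr rfl fun i _ => Finset.sum_comm
      _ = ∑ j, ∑ i, ∑ i', A i j * A i' j := Finset.sum_comm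
      _ = ∑ j, (∑ i, A i j) ^ 2 := Finset.sum_congr rfl fun j _ => by
          rw [sq, Finset.sum_mul_sum]
    have h11 : (fun _ : Fin m => (1:ℝ)) ⬝ᵥ (fun _ : Fin m => (1:ℝ)) = (m:ℝ) := by
      simp [dotProduct]
    have hcs : S ^ 2 ≤ (n:ℝ) * ∑ j, (∑ i, A i j) ^ 2 := by
      have h := sq_sum_le_card_mul_sum_sq (s := (Finset.univ : Finset (Fin n)))
        (f := fun j => ∑ i, A i j)
      simp only [Finset.card_univ, Fintype.card_fin] at h
      calc S ^ 2 = (∑ j, ∑ i, A i j) ^ 2 := by rw [hS, Finset.sum_comm]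
      _ ≤ (n:ℝ) * ∑ j, (∑ i, A i j) ^ 2 := h
    rw [hd, h11] at h1
    have hn0 : (0:ℝ) ≤ (n:ℝ) := by positivity
    nlinarith [hlam0 i₀]
  -- S ≤ σ(i₀) √(mn)
  have hσmn : S ≤ singularValues A i₀ * Real.sqrt ((m:ℝ) * n) := by
    have h := Real.sqrt_le_sqrt hray
    rwa [Real.sqrt_sq hS0, Real.sqrt_mul (hlam0 i₀), ← hσ_eq i₀] at h
  set N : ℝ := Real.sqrt ((m:ℝ) * n) * M with hN
  have hN0 : 0 ≤ N := mul_nonneg (Real.sqrt_nonneg _) hM0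
  have hkey : ∑ i, singularValues A i ^ 2 ≤ singularValues A i₀ * N := by
    have h1 : ∑ i, singularValues A i ^ 2 = ∑ i, lam i :=
      Finset.sum_congr rfl fun i _ => hσsq i
    calc ∑ i, singularValues A i ^ 2 = ∑ i, lam i := h1
    _ ≤ M * S := hF2_le
    _ ≤ M * (singularValues A i₀ * Real.sqrt ((m:ℝ) * n)) :=
        mul_le_mul_of_nonneg_left hσmn hM0
    _ = singularValues A i₀ * N := by rw [hN]; ring
  rw [kyFan]
  apply Real.sSup_le
  · rintro y ⟨s, hs, rfl⟩
    have h := sum_le_aux hk1 (singularValues A) i₀ hσ0 hi₀σ N hN0 hkey s hs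
    calc ∑ i ∈ s, singularValues A i ≤ (1 / 2) * (1 + Real.sqrt k) * N := h
    _ = (1 / 2) * (1 + Real.sqrt k) * Real.sqrt ((m:ℝ) * n) * M := by rw [hN]; ring
  · exact mul_nonneg (by positivity) hM0
end
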